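/- (Theorem 2.3.) Let μ be a σ-invariant Borel probability measure on the two-sided subshift Σ_A, and suppose there exists a cylinder C̃ with 0 < μ(C̃) < 1. Let (l_n)_{n≥1} be a sequence of positive integers with l_n → ∞. Then there exists a sequence of cylinders (C_n)_{n≥1}, defined on finite intervals Λ_n = [n_n⁻, n_n⁺] ⊂ ℤ that are (l_n)-centered (i.e. |n_n⁻ + n_n⁺| ≤ l_n for every n), with ∑_{n=1}^∞ μ(C_n) = ∞, which does NOT satisfy condition (SP): for every constant C > 0 there exists N ≥ 1 such that ∑_{m,n=1}^N [ μ(σ^{-m}(C_m) ∩ σ^{-n}(C_n)) − μ(C_m)μ(C_n) ] > C·∑_{n=1}^N μ(C_n). -/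

import Mathlib

open MeasureTheory Filter

open Topology
open scoped ENNReal

/-- The two-sided subshift of finite type `Σ_A ⊆ {1,…,M}^ℤ`. -/
def shiftSpace (M : ℕ) (Amat : Fin M → Fin M → Bool) : Set (ℤ → Fin M) :=
  {ω | ∀ i : ℤ, Amat (ω i) (ω (i + 1)) = true}

/-- The left shift `(σω)_i = ω_{i+1}` on two-sided sequences. -/
def shiftMap (M : ℕ) : (ℤ → Fin M) → (ℤ → Fin M) := fun ω i => ω (i + 1)

/-- `C` is a cylinder on the interval `[a, b] ⊆ ℤ` (relative to `Σ_A`). -/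
def IsCylinderOn (M : ℕ) (Amat : Fin M → Fin M → Bool) (a b : ℤ)
    (C : Set (ℤ → Fin M)) : Prop :=
  ∃ w : ℤ → Fin M,
    C = {ω | ω ∈ shiftSpace M Amat ∧ ∀ i : ℤ, a ≤ i → i ≤ b → ω i = w i} ∧ C.Nonempty

namespace SPAux

variable {M : ℕ} {Amat : Fin M → Fin M → Bool}

lemma shiftMap_iterate (s : ℕ) (ω : ℤ → Fin M) (i : ℤ) :
    (shiftMap M)^[s] ω i = ω (i + s) := by
  induction s generalizing ω i with
  | zero => simp
  | succ s ih =>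
      rw [Function.iterate_succ_apply]
      rw [ih]
      show ω (i + s + 1) = ω (i + (s + 1 : ℕ))
      congr 1
      push_cast
      ring

lemma measurable_shiftMap : Measurable (shiftMap M) :=
  measurable_pi_lambda _ (fun i => measurable_pi_apply (i + 1))

/-- the cylinder set -/
def Cyl (Amat : Fin M → Fin M → Bool) (a b : ℤ) (w : ℤ → Fin M) : Set (ℤ → Fin M) :=
  {ω | ω ∈ shiftSpace M Amat ∧ ∀ i : ℤ, a ≤ i → i ≤ b → ω i = w i}

lemma cyl_subset_shiftSpace (a b : ℤ) (w : ℤ → Fin M) :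
    Cyl Amat a b w ⊆ shiftSpace M Amat := fun _ h => h.1

lemma measurableSet_shiftSpace : MeasurableSet (shiftSpace M Amat) := by
  have : shiftSpace M Amat = ⋂ i : ℤ, {ω : ℤ → Fin M | Amat (ω i) (ω (i + 1)) = true} := by
    ext ω; simp [shiftSpace]
  rw [this]
  refine MeasurableSet.iInter (fun i => ?_)
  have : {ω : ℤ → Fin M | Amat (ω i) (ω (i + 1)) = true}
      = (fun ω : ℤ → Fin M => (ω i, ω (i+1))) ⁻¹' {p : Fin M × Fin M | Amat p.1 p.2 = true} := rfl
  rw [this]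
  exact ((measurable_pi_apply i).prodMk (measurable_pi_apply (i+1)))
    (Set.Finite.measurableSet (Set.toFinite _))

lemma measurableSet_cyl (a b : ℤ) (w : ℤ → Fin M) : MeasurableSet (Cyl Amat a b w) := by
  have h2 : MeasurableSet {ω : ℤ → Fin M | ∀ i : ℤ, a ≤ i → i ≤ b → ω i = w i} := by
    have : {ω : ℤ → Fin M | ∀ i : ℤ, a ≤ i → i ≤ b → ω i = w i}
        = ⋂ i : ℤ, {ω : ℤ → Fin M | a ≤ i → i ≤ b → ω i = w i} := by
      ext ω; simp
    rw [this]
    refine MeasurableSet.iInter (fun i => ?_)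
    by_cases h1 : a ≤ i
    · by_cases hb : i ≤ b
      · have : {ω : ℤ → Fin M | a ≤ i → i ≤ b → ω i = w i}
            = (fun ω : ℤ → Fin M => ω i) ⁻¹' {w i} := by
          ext ω; simp [h1, hb]
        rw [this]
        exact measurable_pi_apply i (measurableSet_singleton _)
      · have : {ω : ℤ → Fin M | a ≤ i → i ≤ b → ω i = w i} = Set.univ := by
          ext ω; simp [hb]
        rw [this]; exact MeasurableSet.univ
    · have : {ω : ℤ → Fin M | a ≤ i → i ≤ b → ω i = w i} = Set.univ := by
        ext ω; simp [h1]
      rw [this]; exact MeasurableSet.univ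
  exact measurableSet_shiftSpace.inter h2

lemma measurableSet_singleton_fn (x : ℤ → Fin M) : MeasurableSet {x} := by
  have : ({x} : Set (ℤ → Fin M)) = ⋂ i : ℤ, (fun ω : ℤ → Fin M => ω i) ⁻¹' {x i} := by
    ext ω
    simp [funext_iff]
  rw [this]
  exact MeasurableSet.iInter (fun i => measurable_pi_apply i (measurableSet_singleton _))

lemma mem_shiftSpace_iterate_iff (s : ℕ) (ω : ℤ → Fin M) :
    (shiftMap M)^[s] ω ∈ shiftSpace M Amat ↔ ω ∈ shiftSpace M Amat := by
  simp only [shiftSpace, Set.mem_setOf_eq, shiftMap_iterate]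
  constructor
  · intro h j
    have := h (j - s)
    have e1 : j - (s:ℤ) + s = j := by ring
    have e2 : j - (s:ℤ) + 1 + s = j + 1 := by ring
    rwa [e1, e2] at this
  · intro h i
    have := h (i + s)
    have e2 : i + (s:ℤ) + 1 = i + 1 + s := by ring
    rwa [e2] at this

lemma preimage_iterate_cyl (s : ℕ) (a b : ℤ) (w : ℤ → Fin M) :
    (shiftMap M)^[s] ⁻¹' Cyl Amat a b w
      = Cyl Amat (a + s) (b + s) (fun i => w (i - s)) := by
  ext ω
  simp only [Cyl, Set.mem_preimage, Set.mem_setOf_eq, mem_shiftSpace_iterate_iff,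
    shiftMap_iterate]
  constructor
  · rintro ⟨h1, h2⟩
    refine ⟨h1, fun i hi1 hi2 => ?_⟩
    have := h2 (i - s) (by omega) (by omega)
    have e : i - (s:ℤ) + s = i := by ring
    rwa [e] at this
  · rintro ⟨h1, h2⟩
    refine ⟨h1, fun i hi1 hi2 => ?_⟩
    have := h2 (i + s) (by omega) (by omega)
    have e : i + (s:ℤ) - s = i := by ring
    rwa [e] at this

lemma cyl_congr {a b a' b' : ℤ} {w w' : ℤ → Fin M} (h1 : a = a') (h2 : b = b')
    (h3 : ∀ i, a ≤ i → i ≤ b → w i = w' i) :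
    Cyl Amat a b w = Cyl Amat a' b' w' := by
  subst h1; subst h2
  ext ω
  simp only [Cyl, Set.mem_setOf_eq]
  constructor
  · rintro ⟨hs, hw⟩
    exact ⟨hs, fun i hi1 hi2 => (hw i hi1 hi2).trans (h3 i hi1 hi2)⟩
  · rintro ⟨hs, hw⟩
    exact ⟨hs, fun i hi1 hi2 => (hw i hi1 hi2).trans (h3 i hi1 hi2).symm⟩

-- ### chain machinery
def upd2 (w : ℤ → Fin M) (x y : ℤ) (p : Fin M × Fin M) : ℤ → Fin M :=
  Function.update (Function.update w x p.1) y p.2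

lemma upd2_left {w : ℤ → Fin M} {x y : ℤ} (hxy : x ≠ y) (p : Fin M × Fin M) :
    upd2 w x y p x = p.1 := by
  simp [upd2, Function.update_of_ne hxy]

lemma upd2_right {w : ℤ → Fin M} {x y : ℤ} (p : Fin M × Fin M) :
    upd2 w x y p y = p.2 := by simp [upd2]

lemma upd2_other {w : ℤ → Fin M} {x y i : ℤ} (hx : i ≠ x) (hy : i ≠ y) (p : Fin M × Fin M) :
    upd2 w x y p i = w i := by
  simp [upd2, Function.update_of_ne hy, Function.update_of_ne hx]

lemma mem_ext_cyl {lo hi : ℤ} (hlohi : lo ≤ hi) {w : ℤ → Fin M} {z : ℤ → Fin M}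
    (hz : z ∈ Cyl Amat lo hi w) :
    z ∈ Cyl Amat (lo-1) (hi+1) (upd2 w (lo-1) (hi+1) (z (lo-1), z (hi+1))) := by
  refine ⟨hz.1, fun i hi1 hi2 => ?_⟩
  rcases eq_or_ne i (lo - 1) with h | h
  · subst h; rw [upd2_left (by omega)]
  · rcases eq_or_ne i (hi + 1) with h2 | h2
    · subst h2; rw [upd2_right]
    · rw [upd2_other h h2]
      exact hz.2 i (by omega) (by omega)

variable (μ : Measure (ℤ → Fin M)) [IsProbabilityMeasure μ]

lemma exists_best_pair {lo hi : ℤ} (hlohi : lo ≤ hi) {w : ℤ → Fin M}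
    (hne : (Cyl Amat lo hi w).Nonempty) :
    ∃ p : Fin M × Fin M,
      (Cyl Amat (lo-1) (hi+1) (upd2 w (lo-1) (hi+1) p)).Nonempty ∧
      ∀ q, μ (Cyl Amat (lo-1) (hi+1) (upd2 w (lo-1) (hi+1) q))
            ≤ μ (Cyl Amat (lo-1) (hi+1) (upd2 w (lo-1) (hi+1) p)) := by
  classical
  obtain ⟨x, hx⟩ := hne
  set S := Finset.univ.filter
    (fun p : Fin M × Fin M => (Cyl Amat (lo-1) (hi+1) (upd2 w (lo-1) (hi+1) p)).Nonempty) with hSdef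
  have hS : S.Nonempty := by
    refine ⟨(x (lo-1), x (hi+1)), ?_⟩
    simp only [hSdef, Finset.mem_filter, Finset.mem_univ, true_and]
    exact ⟨x, mem_ext_cyl hlohi hx⟩
  obtain ⟨p, hpS, hpmax⟩ := Finset.exists_max_image S
    (fun p => μ (Cyl Amat (lo-1) (hi+1) (upd2 w (lo-1) (hi+1) p))) hS
  refine ⟨p, (Finset.mem_filter.mp hpS).2, fun q => ?_⟩
  by_cases hq : (Cyl Amat (lo-1) (hi+1) (upd2 w (lo-1) (hi+1) q)).Nonempty
  · exact hpmax q (by simp [hSdef, hq])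
  · rw [Set.not_nonempty_iff_eq_empty.mp hq]
    simp

lemma exists_best_sym (hS : (shiftSpace M Amat).Nonempty) (hM : 0 < M) (c : ℤ) :
    ∃ s : Fin M, (Cyl Amat c c (fun _ => s)).Nonempty ∧
      ∀ t : Fin M, μ (Cyl Amat c c (fun _ => t)) ≤ μ (Cyl Amat c c (fun _ => s)) := by
  classical
  obtain ⟨x, hx⟩ := hS
  haveI : Nonempty (Fin M) := ⟨⟨0, hM⟩⟩
  set S := Finset.univ.filter
    (fun s : Fin M => (Cyl Amat c c (fun _ => s)).Nonempty) with hSdef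
  have hSne : S.Nonempty := by
    refine ⟨x c, ?_⟩
    simp only [hSdef, Finset.mem_filter, Finset.mem_univ, true_and]
    refine ⟨x, hx, fun i h1 h2 => ?_⟩
    have : i = c := le_antisymm h2 h1
    subst this; rfl
  obtain ⟨s, hsS, hmax⟩ := Finset.exists_max_image S
    (fun s => μ (Cyl Amat c c (fun _ => s))) hSne
  refine ⟨s, (Finset.mem_filter.mp hsS).2, fun t => ?_⟩
  by_cases ht : (Cyl Amat c c (fun _ => t)).Nonempty
  · exact hmax t (by simp [hSdef, ht])
  · rw [Set.not_nonempty_iff_eq_empty.mp ht]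
    simp


variable (Amat) (hS : (shiftSpace M Amat).Nonempty) (hM : 0 < M)

noncomputable def chain (c : ℤ) : (r : ℕ) →
    {w : ℤ → Fin M // (Cyl Amat (c - (r:ℤ)) (c + (r:ℤ)) w).Nonempty}
  | 0 => ⟨fun _ => Classical.choose (exists_best_sym μ hS hM c), by
      have h := (Classical.choose_spec (exists_best_sym μ hS hM c)).1
      simpa using h⟩
  | r+1 => by
      have prev := chain c r
      have hbp := Classical.choose_spec (exists_best_pair μ
        (by omega : c - (r:ℤ) ≤ c + (r:ℤ)) prev.2)
      refine ⟨upd2 prev.1 (c - (r:ℤ) - 1) (c + (r:ℤ) + 1)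
        (Classical.choose (exists_best_pair μ
          (by omega : c - (r:ℤ) ≤ c + (r:ℤ)) prev.2)), ?_⟩
      have e1 : c - ((r+1 : ℕ) : ℤ) = c - (r:ℤ) - 1 := by push_cast; ring
      have e2 : c + ((r+1 : ℕ) : ℤ) = c + (r:ℤ) + 1 := by push_cast; ring
      rw [e1, e2]
      exact hbp.1

/-- the word of the chain -/
noncomputable def cw (c : ℤ) (r : ℕ) : ℤ → Fin M := (chain Amat μ hS hM c r).1

/-- the chain cylinder -/
noncomputable def Ech (c : ℤ) (r : ℕ) : Set (ℤ → Fin M) :=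
  Cyl Amat (c - (r:ℤ)) (c + (r:ℤ)) (cw Amat μ hS hM c r)

lemma Ech_nonempty (c : ℤ) (r : ℕ) : (Ech Amat μ hS hM c r).Nonempty :=
  (chain Amat μ hS hM c r).2

lemma cw_succ (c : ℤ) (r : ℕ) :
    cw Amat μ hS hM c (r+1) = upd2 (cw Amat μ hS hM c r) (c - (r:ℤ) - 1) (c + (r:ℤ) + 1)
      (Classical.choose (exists_best_pair μ
        (by omega : c - (r:ℤ) ≤ c + (r:ℤ)) (chain Amat μ hS hM c r).2)) := by
  rfl

lemma cw_succ_agree (c : ℤ) (r : ℕ) {i : ℤ} (h1 : c - (r:ℤ) ≤ i) (h2 : i ≤ c + (r:ℤ)) :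
    cw Amat μ hS hM c (r+1) i = cw Amat μ hS hM c r i := by
  rw [cw_succ]
  exact upd2_other (by omega) (by omega) _

lemma cw_agree (c : ℤ) {r r' : ℕ} (hrr : r ≤ r') {i : ℤ}
    (h1 : c - (r:ℤ) ≤ i) (h2 : i ≤ c + (r:ℤ)) :
    cw Amat μ hS hM c r' i = cw Amat μ hS hM c r i := by
  induction r' with
  | zero => have : r = 0 := by omega
            subst this; rfl
  | succ r' ih =>
      rcases Nat.lt_or_ge r (r'+1) with h | h
      · have hr : r ≤ r' := by omega
        rw [cw_succ_agree Amat μ hS hM c r' (by push_cast; omega) (by push_cast; omega)]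
        exact ih hr
      · have : r = r' + 1 := by omega
        subst this; rfl

lemma Ech_antitone (c : ℤ) : Antitone (fun r => Ech Amat μ hS hM c r) := by
  refine antitone_nat_of_succ_le (fun r => ?_)
  intro ω hω
  refine ⟨hω.1, fun i h1 h2 => ?_⟩
  rw [← cw_succ_agree Amat μ hS hM c r h1 h2]
  exact hω.2 i (by push_cast; omega) (by push_cast; omega)

lemma Ech_measure_ratio (c : ℤ) (r : ℕ) :
    μ (Ech Amat μ hS hM c r) ≤ (M:ℝ≥0∞)^2 * μ (Ech Amat μ hS hM c (r+1)) := by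
  classical
  -- cover by extensions
  have hcover : Ech Amat μ hS hM c r ⊆
      ⋃ p ∈ (Finset.univ : Finset (Fin M × Fin M)),
        Cyl Amat (c - (r:ℤ) - 1) (c + (r:ℤ) + 1)
          (upd2 (cw Amat μ hS hM c r) (c - (r:ℤ) - 1) (c + (r:ℤ) + 1) p) := by
    intro z hz
    have := mem_ext_cyl (Amat := Amat) (by omega : c - (r:ℤ) ≤ c + (r:ℤ)) hz
    simp only [Set.mem_iUnion]
    exact ⟨(z (c - (r:ℤ) - 1), z (c + (r:ℤ) + 1)), Finset.mem_univ _, this⟩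
  have h1 : μ (Ech Amat μ hS hM c r) ≤
      ∑ p ∈ (Finset.univ : Finset (Fin M × Fin M)),
        μ (Cyl Amat (c - (r:ℤ) - 1) (c + (r:ℤ) + 1)
          (upd2 (cw Amat μ hS hM c r) (c - (r:ℤ) - 1) (c + (r:ℤ) + 1) p)) :=
    le_trans (measure_mono hcover) (measure_biUnion_finset_le _ _)
  have hbp := Classical.choose_spec (exists_best_pair μ
    (by omega : c - (r:ℤ) ≤ c + (r:ℤ)) (chain Amat μ hS hM c r).2)
  have h2 : ∀ p ∈ (Finset.univ : Finset (Fin M × Fin M)),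
      μ (Cyl Amat (c - (r:ℤ) - 1) (c + (r:ℤ) + 1)
          (upd2 (cw Amat μ hS hM c r) (c - (r:ℤ) - 1) (c + (r:ℤ) + 1) p))
        ≤ μ (Ech Amat μ hS hM c (r+1)) := by
    intro p _
    have := hbp.2 p
    have heq : Ech Amat μ hS hM c (r+1) = Cyl Amat (c - (r:ℤ) - 1) (c + (r:ℤ) + 1)
        (cw Amat μ hS hM c (r+1)) := by
      unfold Ech
      congr 1 <;> push_cast <;> ring
    rw [heq, cw_succ]
    exact this
  calc μ (Ech Amat μ hS hM c r) ≤ _ := h1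
    _ ≤ (Finset.univ : Finset (Fin M × Fin M)).card • μ (Ech Amat μ hS hM c (r+1)) :=
        Finset.sum_le_card_nsmul _ _ _ h2
    _ = (M:ℝ≥0∞)^2 * μ (Ech Amat μ hS hM c (r+1)) := by
        rw [nsmul_eq_mul]
        congr 1
        simp [sq]

lemma Ech_zero_lb (hsupp : μ (shiftSpace M Amat) = 1) (c : ℤ) :
    (M:ℝ≥0∞)⁻¹ ≤ μ (Ech Amat μ hS hM c 0) := by
  classical
  have hcover : shiftSpace M Amat ⊆
      ⋃ s ∈ (Finset.univ : Finset (Fin M)), Cyl Amat c c (fun _ => s) := by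
    intro ω hω
    simp only [Set.mem_iUnion]
    refine ⟨ω c, Finset.mem_univ _, hω, fun i h1 h2 => ?_⟩
    have : i = c := le_antisymm h2 h1
    subst this; rfl
  have hbs := Classical.choose_spec (exists_best_sym μ hS hM c)
  have hEch0 : Ech Amat μ hS hM c 0 = Cyl Amat c c
      (fun _ => Classical.choose (exists_best_sym μ hS hM c)) := by
    have hw : cw Amat μ hS hM c 0 = fun _ => Classical.choose (exists_best_sym μ hS hM c) := rfl
    unfold Ech
    rw [hw]
    norm_num
  have h1 : (1:ℝ≥0∞) ≤ (M:ℝ≥0∞) * μ (Ech Amat μ hS hM c 0) := by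
    calc (1:ℝ≥0∞) = μ (shiftSpace M Amat) := hsupp.symm
      _ ≤ ∑ s ∈ (Finset.univ : Finset (Fin M)), μ (Cyl Amat c c (fun _ => s)) :=
          le_trans (measure_mono hcover) (measure_biUnion_finset_le _ _)
      _ ≤ (Finset.univ : Finset (Fin M)).card • μ (Ech Amat μ hS hM c 0) := by
          refine Finset.sum_le_card_nsmul _ _ _ (fun s _ => ?_)
          rw [hEch0]
          exact hbs.2 s
      _ = (M:ℝ≥0∞) * μ (Ech Amat μ hS hM c 0) := by
          rw [nsmul_eq_mul]; simp
  have hM0 : (M:ℝ≥0∞) ≠ 0 := by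
    simp only [ne_eq, Nat.cast_eq_zero]
    omega
  calc (M:ℝ≥0∞)⁻¹ = (M:ℝ≥0∞)⁻¹ * 1 := (mul_one _).symm
    _ ≤ (M:ℝ≥0∞)⁻¹ * ((M:ℝ≥0∞) * μ (Ech Amat μ hS hM c 0)) := mul_le_mul_right h1 _
    _ = μ (Ech Amat μ hS hM c 0) := by
        rw [← mul_assoc, ENNReal.inv_mul_cancel hM0 (by simp), one_mul]

lemma Ech_tendsto_zero (hna : ∀ x : ℤ → Fin M, μ {x} = 0) (c : ℤ) :
    Tendsto (fun r => μ (Ech Amat μ hS hM c r)) atTop (𝓝 0) := by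
  have htend := tendsto_measure_iInter_atTop (μ := μ)
    (fun r => (measurableSet_cyl _ _ _).nullMeasurableSet)
    (Ech_antitone Amat μ hS hM c) ⟨0, measure_ne_top μ _⟩
  have hsub : (⋂ r, Ech Amat μ hS hM c r) ⊆
      {fun i => cw Amat μ hS hM c ((i - c).natAbs) i} := by
    intro ω hω
    simp only [Set.mem_iInter] at hω
    simp only [Set.mem_singleton_iff]
    funext i
    have hr := hω ((i - c).natAbs)
    exact hr.2 i (by omega) (by omega)
  have hzero : μ (⋂ r, Ech Amat μ hS hM c r) = 0 :=
    le_antisymm (le_trans (measure_mono hsub) (le_of_eq (hna _))) zero_le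
  have heq : (⋂ r, Ech Amat μ hS hM c r)
      = ⋂ n : ℕ, Cyl Amat (c - (n:ℤ)) (c + (n:ℤ)) (cw Amat μ hS hM c n) := rfl
  rw [heq] at hzero
  rw [hzero] at htend
  exact htend

lemma chain_band (hsupp : μ (shiftSpace M Amat) = 1) (hna : ∀ x : ℤ → Fin M, μ {x} = 0)
    (c : ℤ) {L : ℕ} (hML : M ≤ L) :
    ∃ r, (L:ℝ≥0∞)⁻¹ ≤ μ (Ech Amat μ hS hM c r) ∧
      μ (Ech Amat μ hS hM c r) ≤ (M:ℝ≥0∞)^2 * (L:ℝ≥0∞)⁻¹ := by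
  classical
  have hL0 : 0 < L := by omega
  have hLinvpos : (0:ℝ≥0∞) < (L:ℝ≥0∞)⁻¹ := by
    simp [ENNReal.inv_pos]
  have hev : ∀ᶠ r in atTop, μ (Ech Amat μ hS hM c r) < (L:ℝ≥0∞)⁻¹ :=
    (Ech_tendsto_zero Amat μ hS hM hna c).eventually_lt_const hLinvpos
  have hex : ∃ r, μ (Ech Amat μ hS hM c r) < (L:ℝ≥0∞)⁻¹ := hev.exists
  set r0 := Nat.find hex with hr0
  have hfind : μ (Ech Amat μ hS hM c r0) < (L:ℝ≥0∞)⁻¹ := Nat.find_spec hex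
  have hr0ne : r0 ≠ 0 := by
    intro h0
    have h1 : (L:ℝ≥0∞)⁻¹ ≤ (M:ℝ≥0∞)⁻¹ := by
      apply ENNReal.inv_le_inv.mpr
      exact_mod_cast hML
    have h2 := Ech_zero_lb Amat μ hS hM hsupp c
    rw [h0] at hfind
    exact absurd hfind (not_lt.mpr (le_trans h1 h2))
  obtain ⟨r1, hr1⟩ : ∃ r1, r0 = r1 + 1 := ⟨r0 - 1, by omega⟩
  refine ⟨r1, ?_, ?_⟩
  · have := Nat.find_min hex (by omega : r1 < r0)
    exact not_lt.mp this
  · calc μ (Ech Amat μ hS hM c r1) ≤ (M:ℝ≥0∞)^2 * μ (Ech Amat μ hS hM c (r1+1)) :=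
        Ech_measure_ratio Amat μ hS hM c r1
      _ ≤ (M:ℝ≥0∞)^2 * (L:ℝ≥0∞)⁻¹ := by
        apply mul_le_mul_right
        rw [← hr1]
        exact le_of_lt hfind

lemma chain_small (hna : ∀ x : ℤ → Fin M, μ {x} = 0) (c : ℤ) (ε : ℝ≥0∞) (hε : 0 < ε) :
    ∃ r, μ (Ech Amat μ hS hM c r) ≤ ε := by
  have hev : ∀ᶠ r in atTop, μ (Ech Amat μ hS hM c r) < ε :=
    (Ech_tendsto_zero Amat μ hS hM hna c).eventually_lt_const hε
  obtain ⟨r, hr⟩ := hev.exists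
  exact ⟨r, le_of_lt hr⟩

section MkC

def mkC (Amat : Fin M → Fin M → Bool) (c : ℤ) (r : ℕ) (W : ℤ → Fin M) (n : ℕ) :
    Set (ℤ → Fin M) :=
  Cyl Amat (c - (r:ℤ) - (n:ℤ)) (c + (r:ℤ) - (n:ℤ)) (fun i => W (i + (n:ℤ)))

lemma preimage_mkC (c : ℤ) (r : ℕ) (W : ℤ → Fin M) (n : ℕ) :
    (shiftMap M)^[n] ⁻¹' mkC Amat c r W n = Cyl Amat (c - (r:ℤ)) (c + (r:ℤ)) W := by
  rw [mkC, preimage_iterate_cyl]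
  refine cyl_congr (by ring) (by ring) (fun i _ _ => ?_)
  congr 1; ring

lemma measure_mkC (μ : Measure (ℤ → Fin M)) (hinv : MeasurePreserving (shiftMap M) μ μ)
    (c : ℤ) (r : ℕ) (W : ℤ → Fin M) (n : ℕ) :
    μ (mkC Amat c r W n) = μ (Cyl Amat (c - (r:ℤ)) (c + (r:ℤ)) W) := by
  have h := (hinv.iterate n).measure_preimage
    (s := mkC Amat c r W n) (measurableSet_cyl _ _ _).nullMeasurableSet
  rw [preimage_mkC] at h
  exact h.symm

end MkC

section Atomic

lemma toReal_mono' {X Y : Set (ℤ → Fin M)} (h : X ⊆ Y) :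
    (μ X).toReal ≤ (μ Y).toReal :=
  ENNReal.toReal_mono (measure_ne_top μ Y) (measure_mono h)

lemma toReal_le_one (X : Set (ℤ → Fin M)) : (μ X).toReal ≤ 1 := by
  have := prob_le_one (μ := μ) (s := X)
  calc (μ X).toReal ≤ (1:ℝ≥0∞).toReal := ENNReal.toReal_mono ENNReal.one_ne_top this
    _ = 1 := by simp

lemma measurableSet_tail (s : ℤ → Fin M) (t : ℤ) :
    MeasurableSet {ω : ℤ → Fin M | ω ∈ shiftSpace M Amat ∧ ∀ i : ℤ, t ≤ i → ω i = s i} := by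
  have h2 : MeasurableSet {ω : ℤ → Fin M | ∀ i : ℤ, t ≤ i → ω i = s i} := by
    have : {ω : ℤ → Fin M | ∀ i : ℤ, t ≤ i → ω i = s i}
        = ⋂ i : ℤ, {ω : ℤ → Fin M | t ≤ i → ω i = s i} := by ext ω; simp
    rw [this]
    refine MeasurableSet.iInter (fun i => ?_)
    by_cases h1 : t ≤ i
    · have : {ω : ℤ → Fin M | t ≤ i → ω i = s i} = (fun ω : ℤ → Fin M => ω i) ⁻¹' {s i} := by
        ext ω; simp [h1]
      rw [this]
      exact measurable_pi_apply i (measurableSet_singleton _)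
    · have : {ω : ℤ → Fin M | t ≤ i → ω i = s i} = Set.univ := by
        ext ω; simp [h1]
      rw [this]; exact MeasurableSet.univ
  exact measurableSet_shiftSpace.inter h2

/-- In the atomic case, the one-sided agreement set cannot have full measure. -/
lemma tail_not_full (hinv : MeasurePreserving (shiftMap M) μ μ)
    {a0 b0 : ℤ} {Ct : Set (ℤ → Fin M)} (hab : a0 ≤ b0)
    (hCt : IsCylinderOn M Amat a0 b0 Ct) (hpos : 0 < μ Ct) (hlt1 : μ Ct < 1)
    (x0 : ℤ → Fin M)
    (hfull : μ {ω : ℤ → Fin M | ω ∈ shiftSpace M Amat ∧ ∀ i : ℤ, 0 ≤ i → ω i = x0 i} = 1) :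
    False := by
  classical
  set A := {ω : ℤ → Fin M | ω ∈ shiftSpace M Amat ∧ ∀ i : ℤ, 0 ≤ i → ω i = x0 i} with hAdef
  have hAmeas : MeasurableSet A := measurableSet_tail Amat x0 0
  -- the preimage of A under the shift also has measure one
  have hA'meas : μ ((shiftMap M) ⁻¹' A) = 1 := by
    rw [hinv.measure_preimage hAmeas.nullMeasurableSet, hfull]
  -- intersect
  have hint : μ (A ∩ (shiftMap M) ⁻¹' A) = 1 := by
    have hc : μ ((shiftMap M ⁻¹' A)ᶜ) = 0 := by
      have := measure_compl (hinv.measurable hAmeas) (measure_ne_top μ _)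
      rw [hA'meas] at this
      simp [this]
    have : A ∩ (shiftMap M) ⁻¹' A = A \ ((shiftMap M) ⁻¹' A)ᶜ := by
      ext ω; simp [Set.mem_diff]
    rw [this, measure_diff_null hc, hfull]
  obtain ⟨z, hz⟩ := nonempty_of_measure_ne_zero (by rw [hint]; exact one_ne_zero)
  have hz1 : ∀ i : ℤ, 0 ≤ i → z i = x0 i := hz.1.2
  have hz2 : ∀ i : ℤ, 0 ≤ i → z (i+1) = x0 i := by
    intro i hi
    exact hz.2.2 i hi
  -- x0 is eventually constant
  have hstep : ∀ i : ℤ, 0 ≤ i → x0 (i+1) = x0 i := by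
    intro i hi
    rw [← hz1 (i+1) (by omega), hz2 i hi]
  have hconstN : ∀ n : ℕ, x0 (n:ℤ) = x0 0 := by
    intro n
    induction n with
    | zero => rfl
    | succ n ih => rw [show ((n+1:ℕ):ℤ) = (n:ℤ)+1 by push_cast; ring, hstep n (by positivity), ih]
  have hconst : ∀ i : ℤ, 0 ≤ i → x0 i = x0 0 := by
    intro i hi
    have : i = ((i.toNat : ℕ) : ℤ) := by omega
    rw [this, hconstN]
  set s : Fin M := x0 0 with hsdef
  -- shifted constant sets have measure one
  obtain ⟨m, hm⟩ : ∃ m : ℕ, -(m:ℤ) ≤ a0 := ⟨a0.natAbs, by omega⟩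
  set Bm := {ω : ℤ → Fin M | ω ∈ shiftSpace M Amat ∧ ∀ i : ℤ, -(m:ℤ) ≤ i → ω i = s} with hBmdef
  have hBmmeas : MeasurableSet Bm := measurableSet_tail Amat (fun _ => s) (-(m:ℤ))
  have hBmpre : (shiftMap M)^[m] ⁻¹' Bm
      = {ω : ℤ → Fin M | ω ∈ shiftSpace M Amat ∧ ∀ i : ℤ, 0 ≤ i → ω i = s} := by
    ext ω
    simp only [hBmdef, Set.mem_preimage, Set.mem_setOf_eq, mem_shiftSpace_iterate_iff,
      shiftMap_iterate]
    constructor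
    · rintro ⟨h1, h2⟩
      refine ⟨h1, fun i hi => ?_⟩
      have := h2 (i - m) (by omega)
      have e : i - (m:ℤ) + m = i := by ring
      rwa [e] at this
    · rintro ⟨h1, h2⟩
      exact ⟨h1, fun i hi => h2 (i + m) (by omega)⟩
  have hB0 : μ {ω : ℤ → Fin M | ω ∈ shiftSpace M Amat ∧ ∀ i : ℤ, 0 ≤ i → ω i = s} = 1 := by
    refine le_antisymm prob_le_one ?_
    rw [← hfull]
    refine measure_mono (fun ω hω => ⟨hω.1, fun i hi => ?_⟩)
    rw [hω.2 i hi, hconst i hi]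
  have hBm1 : μ Bm = 1 := by
    have := (hinv.iterate m).measure_preimage (s := Bm) hBmmeas.nullMeasurableSet
    rw [hBmpre, hB0] at this
    exact this.symm
  -- now contradict the cylinder Ct
  obtain ⟨w, hCteq, -⟩ := hCt
  by_cases hws : ∀ i : ℤ, a0 ≤ i → i ≤ b0 → w i = s
  · -- Bm ⊆ Ct, so μ Ct = 1
    have hsub : Bm ⊆ Ct := by
      intro ω hω
      rw [hCteq]
      refine ⟨hω.1, fun i h1 h2 => ?_⟩
      rw [hω.2 i (by omega), hws i h1 h2]
    have : (1:ℝ≥0∞) ≤ μ Ct := hBm1 ▸ measure_mono hsub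
    exact absurd hlt1 (not_lt.mpr this)
  · -- Ct ∩ Bm = ∅, so μ Ct = 0
    push_neg at hws
    obtain ⟨i0, hi1, hi2, hi3⟩ := hws
    have hdisj : Ct ⊆ Bmᶜ := by
      intro ω hω
      rw [hCteq] at hω
      intro hmem
      exact hi3 (by rw [← hω.2 i0 hi1 hi2, hmem.2 i0 (by omega)])
    have hcompl : μ (Bmᶜ) = 0 := by
      have := measure_compl hBmmeas (measure_ne_top μ _)
      rw [hBm1] at this
      simp [this]
    have : μ Ct = 0 := le_antisymm (le_trans (measure_mono hdisj) (le_of_eq hcompl)) zero_le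
    exact absurd hpos (by rw [this]; exact lt_irrefl _)

lemma numeric_atomic (K lam del c2 T x N : ℝ)
    (hdel : del = lam*(1-lam)/6) (hc2 : c2 = lam*(1-lam)/2)
    (hK : 0 < K) (hlampos : 0 < lam) (hlamlt1 : lam < 1) (hxnn : 0 ≤ x)
    (hNpos : 1 ≤ N) (hTle : T ≤ x + (lam+del)*N) (hTleN : T ≤ N) (hTnonneg : 0 ≤ T)
    (hNreal : (K + 2*x + x^2 + 1)/c2 ≤ N) :
    K * T < N^2*lam - T*T := by
  have hcub : lam * (1 - lam) ≤ 1/4 := by nlinarith [sq_nonneg (lam - 1/2)]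
  have hcpos : 0 < lam * (1 - lam) := by nlinarith
  have hc2pos : 0 < c2 := by rw [hc2]; linarith
  have hq : lam - (lam + del)^2 ≥ c2 := by
    rw [hc2, hdel]
    nlinarith [hcub, hcpos, hlampos, hlamlt1]
  have hqle1 : lam + del ≤ 1 := by
    rw [hdel]
    nlinarith [hcpos, hlampos, hlamlt1]
  have hqnn : 0 ≤ lam + del := by
    rw [hdel]; nlinarith
  have hNnn : (0:ℝ) ≤ N := by linarith
  set q : ℝ := lam + del with hqdef
  have hT2 : T * T ≤ (x + q * N) * (x + q * N) :=
    mul_self_le_mul_self hTnonneg hTle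
  have h3 : q^2 * N^2 ≤ (lam - c2) * N^2 := by
    have hq2 : q^2 ≤ lam - c2 := by nlinarith
    exact mul_le_mul_of_nonneg_right hq2 (sq_nonneg _)
  have h4 : 2 * x * q * N ≤ 2 * x * N := by
    have := mul_le_mul_of_nonneg_left (mul_le_mul_of_nonneg_right hqle1 hNnn) hxnn
    nlinarith [this]
  have h5 : (x + q * N) * (x + q * N) = x^2 + 2 * x * q * N + q^2 * N^2 := by ring
  have hc2N : c2 * N ≥ K + 2*x + x^2 + 1 := by
    have := mul_le_mul_of_nonneg_left hNreal (le_of_lt hc2pos)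
    calc c2 * N ≥ c2 * ((K + 2*x + x^2 + 1)/c2) := this
      _ = K + 2*x + x^2 + 1 := by field_simp
  have h6 : c2 * N^2 ≥ (K + 2*x + x^2 + 1) * N := by
    have := mul_le_mul_of_nonneg_right hc2N hNnn
    calc c2 * N^2 = c2 * N * N := by ring
      _ ≥ (K + 2*x + x^2 + 1) * N := this
  have h7 : K * T ≤ K * N := mul_le_mul_of_nonneg_left hTleN (le_of_lt hK)
  have h8 : x^2 ≤ x^2 * N := by nlinarith [sq_nonneg x]
  have e3 : (lam - c2) * N^2 = lam*N^2 - c2*N^2 := by ring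
  have h9 : T*T ≤ x^2 + 2*x*N + (lam*N^2 - c2*N^2) := by
    rw [← e3]
    linarith [hT2, h5, h4, h3]
  have e6 : (K + 2*x + x^2 + 1)*N = K*N + 2*x*N + x^2*N + N := by ring
  have h10 : c2*N^2 ≥ K*N + 2*x*N + x^2*N + N := by
    rw [← e6]
    linarith [h6]
  linarith [h9, h10, h7, h8, hNpos]

/-- The atomic case of the main theorem. -/
lemma atomic_case (hM : 2 ≤ M)
    (hinv : MeasurePreserving (shiftMap M) μ μ) (hsupp : μ (shiftSpace M Amat) = 1)
    {a0 b0 : ℤ} {Ct : Set (ℤ → Fin M)} (hab : a0 ≤ b0)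
    (hCt : IsCylinderOn M Amat a0 b0 Ct) (hpos : 0 < μ Ct) (hlt1 : μ Ct < 1)
    (l : ℕ → ℕ)
    (x0 : ℤ → Fin M) (hx0 : μ {x0} ≠ 0) :
    ∃ (C : ℕ → Set (ℤ → Fin M)) (a b : ℕ → ℤ),
      (∀ n, 1 ≤ n → a n ≤ b n ∧ IsCylinderOn M Amat (a n) (b n) (C n) ∧
        |a n + b n| ≤ (l n : ℤ)) ∧
      Tendsto (fun N : ℕ => ∑ n ∈ Finset.Icc 1 N, (μ (C n)).toReal) atTop atTop ∧
      ∀ K : ℝ, 0 < K → ∃ N : ℕ, 1 ≤ N ∧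
        K * ∑ n ∈ Finset.Icc 1 N, (μ (C n)).toReal <
          ∑ m ∈ Finset.Icc 1 N, ∑ n ∈ Finset.Icc 1 N,
            ((μ ((shiftMap M)^[m] ⁻¹' C m ∩ (shiftMap M)^[n] ⁻¹' C n)).toReal -
              (μ (C m)).toReal * (μ (C n)).toReal) := by
  classical
  -- the nested sets
  set D : ℕ → Set (ℤ → Fin M) := fun n => Cyl Amat ((n:ℤ) - (n:ℤ)) ((n:ℤ) + (n:ℤ)) x0 with hDdef
  set A := {ω : ℤ → Fin M | ω ∈ shiftSpace M Amat ∧ ∀ i : ℤ, 0 ≤ i → ω i = x0 i} with hAdef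
  have hAmeas : MeasurableSet A := measurableSet_tail Amat x0 0
  have hASub : ∀ n, A ⊆ D n := by
    intro n ω hω
    exact ⟨hω.1, fun i h1 h2 => hω.2 i (by omega)⟩
  have hDanti : Antitone D := by
    intro m n hmn ω hω
    exact ⟨hω.1, fun i h1 h2 => hω.2 i (by omega) (by omega)⟩
  have hx0S : x0 ∈ shiftSpace M Amat := by
    by_contra hx
    have : μ {x0} ≤ μ (shiftSpace M Amat)ᶜ := measure_mono (by simpa using hx)
    have hcompl : μ (shiftSpace M Amat)ᶜ = 0 := by
      have := measure_compl (measurableSet_shiftSpace (Amat := Amat)) (measure_ne_top μ _)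
      rw [hsupp] at this
      simp [this]
    exact hx0 (le_antisymm (hcompl ▸ this) zero_le)
  have hx0A : x0 ∈ A := ⟨hx0S, fun i _ => rfl⟩
  -- the limit measure
  set lam : ℝ := (μ A).toReal with hlamdef
  have hlampos : 0 < lam := by
    refine ENNReal.toReal_pos (fun h0 => hx0 ?_) (measure_ne_top μ _)
    exact le_antisymm (h0 ▸ measure_mono (Set.singleton_subset_iff.mpr hx0A)) zero_le
  have hlamlt1 : lam < 1 := by
    rcases lt_or_ge lam 1 with h | h
    · exact h
    · exfalso
      refine tail_not_full Amat μ hinv hab hCt hpos hlt1 x0 ?_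
      have h1 : μ A ≤ 1 := prob_le_one
      have h2 : (1:ℝ≥0∞) ≤ μ A := by
        rw [show (1:ℝ≥0∞) = ENNReal.ofReal 1 by simp]
        rw [← ENNReal.ofReal_toReal (measure_ne_top μ A)]
        exact ENNReal.ofReal_le_ofReal h
      exact le_antisymm h1 h2
  set beta : ℕ → ℝ := fun n => (μ (D n)).toReal with hbetadef
  have hbeta_ge : ∀ n, lam ≤ beta n := fun n => toReal_mono' μ (hASub n)
  have hbeta_le1 : ∀ n, beta n ≤ 1 := fun n => toReal_le_one μ _
  have hbeta_nonneg : ∀ n, 0 ≤ beta n := fun n => ENNReal.toReal_nonneg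
  -- convergence of beta to lam
  have hInter : (⋂ n, D n) = A := by
    ext ω
    simp only [Set.mem_iInter]
    constructor
    · intro h
      refine ⟨(h 0).1, fun i hi => ?_⟩
      exact (h i.toNat).2 i (by omega) (by omega)
    · intro h n
      exact hASub n h
  have htendbeta : Tendsto beta atTop (𝓝 lam) := by
    have h1 := tendsto_measure_iInter_atTop (μ := μ)
      (fun n => (measurableSet_cyl _ _ _).nullMeasurableSet) hDanti ⟨0, measure_ne_top μ _⟩
    rw [hInter] at h1
    have h2 := (ENNReal.tendsto_toReal (measure_ne_top μ A)).comp h1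
    exact h2
  -- the cylinders
  set CC : ℕ → Set (ℤ → Fin M) := fun n => mkC Amat (n:ℤ) n x0 n with hCCdef
  have hmeasCC : ∀ n, μ (CC n) = μ (D n) := fun n => measure_mkC Amat μ hinv (n:ℤ) n x0 n
  have hpreim : ∀ n : ℕ, (shiftMap M)^[n] ⁻¹' CC n = D n := fun n => preimage_mkC Amat (n:ℤ) n x0 n
  refine ⟨CC, fun n => (n:ℤ) - (n:ℤ) - (n:ℤ), fun n => (n:ℤ) + (n:ℤ) - (n:ℤ), ?_, ?_, ?_⟩
  · -- cylinder properties
    intro n hn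
    have hne : (CC n).Nonempty := by
      refine nonempty_of_measure_ne_zero (μ := μ) ?_
      rw [hmeasCC n]
      intro h0
      have h1 : μ A ≤ μ (D n) := measure_mono (hASub n)
      rw [h0] at h1
      have h2 : μ A = 0 := le_antisymm h1 zero_le
      rw [hlamdef, h2] at hlampos
      simp at hlampos
    refine ⟨?_, ⟨fun i => x0 (i + (n:ℤ)), rfl, hne⟩, ?_⟩
    · show (n:ℤ) - n - n ≤ (n:ℤ) + n - n
      omega
    · show |((n:ℤ) - n - n) + ((n:ℤ) + n - n)| ≤ (l n : ℤ)
      have : ((n:ℤ) - n - n) + ((n:ℤ) + n - n) = 0 := by ring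
      rw [this]
      simp
  · -- divergence
    have hlow : ∀ N : ℕ, lam * N ≤ ∑ n ∈ Finset.Icc 1 N, (μ (CC n)).toReal := by
      intro N
      calc lam * N = ∑ n ∈ Finset.Icc 1 N, lam := by
            rw [Finset.sum_const, Nat.card_Icc]
            simp [nsmul_eq_mul]
            ring
        _ ≤ ∑ n ∈ Finset.Icc 1 N, (μ (CC n)).toReal := by
            refine Finset.sum_le_sum (fun n _ => ?_)
            rw [hmeasCC n]
            exact hbeta_ge n
    refine tendsto_atTop_mono hlow ?_
    exact Tendsto.const_mul_atTop hlampos tendsto_natCast_atTop_atTop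
  · -- failure of (SP)
    intro K hK
    -- pick δ and n0
    set del : ℝ := lam * (1 - lam) / 6 with hdel
    have hdelpos : 0 < del := by
      rw [hdel]; nlinarith
    obtain ⟨n0, hn0⟩ : ∃ n0 : ℕ, ∀ n ≥ n0, beta n ≤ lam + del := by
      have hev : ∀ᶠ n in atTop, beta n < lam + del :=
        htendbeta.eventually_lt_const (by linarith)
      obtain ⟨n0, hn0⟩ := eventually_atTop.mp hev
      exact ⟨n0, fun n hn => le_of_lt (hn0 n hn)⟩
    set c2 : ℝ := lam * (1 - lam) / 2 with hc2
    have hc2pos : 0 < c2 := by rw [hc2]; nlinarith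
    set N : ℕ := n0 + 1 + Nat.ceil ((K + 2*(n0:ℝ) + (n0:ℝ)^2 + 1)/c2) with hNdef
    have hN1 : 1 ≤ N := by omega
    refine ⟨N, hN1, ?_⟩
    set T : ℝ := ∑ n ∈ Finset.Icc 1 N, (μ (CC n)).toReal with hT
    have hTbeta : T = ∑ n ∈ Finset.Icc 1 N, beta n := by
      rw [hT]
      exact Finset.sum_congr rfl (fun n _ => by rw [hmeasCC n])
    -- upper bounds on T
    have hTle : T ≤ n0 + (lam + del) * N := by
      rw [hTbeta]
      have hpt : ∀ n ∈ Finset.Icc 1 N, beta n ≤ (if n < n0 then 1 else (lam + del)) := by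
        intro n _
        by_cases h : n < n0
        · simp [h, hbeta_le1 n]
        · simp only [h, if_false]
          exact hn0 n (by omega)
      calc ∑ n ∈ Finset.Icc 1 N, beta n
          ≤ ∑ n ∈ Finset.Icc 1 N, (if n < n0 then (1:ℝ) else (lam + del)) :=
            Finset.sum_le_sum hpt
        _ = ∑ n ∈ (Finset.Icc 1 N).filter (fun n => n < n0), (1:ℝ)
            + ∑ n ∈ (Finset.Icc 1 N).filter (fun n => ¬ n < n0), (lam + del) :=
            Finset.sum_ite _ _
        _ ≤ n0 * 1 + (lam + del) * N := by
            have hcard1 : ((Finset.Icc 1 N).filter (fun n => n < n0)).card ≤ n0 := by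
              have hsub : (Finset.Icc 1 N).filter (fun n => n < n0) ⊆ Finset.Ico 1 n0 := by
                intro x hx
                simp only [Finset.mem_filter, Finset.mem_Icc] at hx
                simp only [Finset.mem_Ico]
                omega
              calc ((Finset.Icc 1 N).filter (fun n => n < n0)).card
                  ≤ (Finset.Ico 1 n0).card := Finset.card_le_card hsub
                _ ≤ n0 := by rw [Nat.card_Ico]; omega
            have hcard2 : ((Finset.Icc 1 N).filter (fun n => ¬ n < n0)).card ≤ N := by
              calc _ ≤ (Finset.Icc 1 N).card := Finset.card_le_card (Finset.filter_subset _ _)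
                _ = N := by rw [Nat.card_Icc]; omega
            have h1 : ∑ n ∈ (Finset.Icc 1 N).filter (fun n => n < n0), (1:ℝ) ≤ n0 * 1 := by
              rw [Finset.sum_const, nsmul_eq_mul, mul_one, mul_one]
              exact_mod_cast hcard1
            have h2 : ∑ n ∈ (Finset.Icc 1 N).filter (fun n => ¬ n < n0), (lam + del)
                ≤ (lam + del) * N := by
              rw [Finset.sum_const, nsmul_eq_mul]
              have hld : 0 ≤ lam + del := by linarith
              have : (((Finset.Icc 1 N).filter (fun n => ¬ n < n0)).card : ℝ) ≤ N :=
                by exact_mod_cast hcard2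
              nlinarith
            linarith
        _ = n0 + (lam + del) * N := by ring
    have hTleN : T ≤ N := by
      rw [hTbeta]
      calc ∑ n ∈ Finset.Icc 1 N, beta n ≤ ∑ n ∈ Finset.Icc 1 N, (1:ℝ) :=
            Finset.sum_le_sum (fun n _ => hbeta_le1 n)
        _ = N := by rw [Finset.sum_const, Nat.card_Icc]; simp
    have hTnonneg : 0 ≤ T := by
      rw [hTbeta]
      exact Finset.sum_nonneg (fun n _ => hbeta_nonneg n)
    -- lower bound on the double sum
    have hkey : ∀ m n : ℕ, lam - beta m * beta n ≤
        (μ ((shiftMap M)^[m] ⁻¹' CC m ∩ (shiftMap M)^[n] ⁻¹' CC n)).toReal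
          - (μ (CC m)).toReal * (μ (CC n)).toReal := by
      intro m n
      rw [hpreim m, hpreim n, hmeasCC m, hmeasCC n]
      have hge : lam ≤ (μ (D m ∩ D n)).toReal := by
        refine toReal_mono' μ ?_
        intro ω hω
        exact ⟨hASub m hω, hASub n hω⟩
      linarith
    have hsum1 : (N:ℝ)^2 * lam - T * T ≤
        ∑ m ∈ Finset.Icc 1 N, ∑ n ∈ Finset.Icc 1 N,
            ((μ ((shiftMap M)^[m] ⁻¹' CC m ∩ (shiftMap M)^[n] ⁻¹' CC n)).toReal -
              (μ (CC m)).toReal * (μ (CC n)).toReal) := by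
      have h1 : ∑ m ∈ Finset.Icc 1 N, ∑ n ∈ Finset.Icc 1 N, (lam - beta m * beta n)
          = (N:ℝ)^2 * lam - T * T := by
        have e1 : ∀ m : ℕ, ∑ n ∈ Finset.Icc 1 N, (lam - beta m * beta n)
            = (N:ℝ) * lam - beta m * ∑ n ∈ Finset.Icc 1 N, beta n := by
          intro m
          rw [Finset.sum_sub_distrib, Finset.sum_const, ← Finset.mul_sum, Nat.card_Icc]
          simp [nsmul_eq_mul]
        calc ∑ m ∈ Finset.Icc 1 N, ∑ n ∈ Finset.Icc 1 N, (lam - beta m * beta n)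
            = ∑ m ∈ Finset.Icc 1 N, ((N:ℝ) * lam - beta m * ∑ n ∈ Finset.Icc 1 N, beta n) :=
              Finset.sum_congr rfl (fun m _ => e1 m)
          _ = (N:ℝ)^2 * lam - T * T := by
              rw [Finset.sum_sub_distrib, Finset.sum_const, ← Finset.sum_mul, Nat.card_Icc,
                hTbeta]
              simp [nsmul_eq_mul]
              ring
      rw [← h1]
      refine Finset.sum_le_sum (fun m _ => Finset.sum_le_sum (fun n _ => hkey m n))
    -- numeric conclusion
    have hNreal : ((K + 2*(n0:ℝ) + (n0:ℝ)^2 + 1)/c2) ≤ N := by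
      calc ((K + 2*(n0:ℝ) + (n0:ℝ)^2 + 1)/c2) ≤ (Nat.ceil ((K + 2*(n0:ℝ) + (n0:ℝ)^2 + 1)/c2) : ℝ) :=
            Nat.le_ceil _
        _ ≤ N := by
            rw [hNdef]
            push_cast
            linarith [Nat.cast_nonneg (α := ℝ) n0]
    clear_value beta lam del c2 N T
    have hNpos : (1:ℝ) ≤ (N:ℝ) := by exact_mod_cast hN1
    have hfinal : K * T < (N:ℝ)^2 * lam - T * T :=
      numeric_atomic K lam del c2 T (n0:ℝ) (N:ℝ) hdel hc2 hK hlampos hlamlt1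
        (Nat.cast_nonneg n0) hNpos hTle hTleN hTnonneg hNreal
    calc K * T < (N:ℝ)^2 * lam - T * T := hfinal
      _ ≤ _ := hsum1

end Atomic

section NonAtomicHelpers

lemma geom_icc_le_one : ∀ N : ℕ, ∑ n ∈ Finset.Icc 1 N, ((2:ℝ)⁻¹)^n ≤ 1 := by
  have key : ∀ N : ℕ, ∑ n ∈ Finset.Icc 1 N, ((2:ℝ)⁻¹)^n = 1 - ((2:ℝ)⁻¹)^N := by
    intro N
    induction N with
    | zero => simp
    | succ N ih =>
        rw [Finset.sum_Icc_succ_top (by omega), ih, pow_succ]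
        ring
  intro N
  rw [key N]
  have : (0:ℝ) ≤ ((2:ℝ)⁻¹)^N := by positivity
  linarith

lemma numeric_nonatomic (K S L γ Mr kr Z : ℝ)
    (hZ : Z = (kr+1) * Mr^2 + 1)
    (hK : 0 < K) (hkK : K ≤ kr) (hMr : 2 ≤ Mr)
    (hS0 : 0 ≤ S) (hSle : S ≤ Z)
    (hL : 6*Mr^2 + 2*Z^2 + 2*kr*Z + 2 ≤ L)
    (hγlo : 1/L ≤ γ) (hγhi : γ ≤ Mr^2/L) :
    K * S < L^2 * (γ - γ^2) - S^2 := by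
  have hkr0 : 0 < kr := lt_of_lt_of_le hK hkK
  have hMr0 : 0 < Mr := by linarith
  have hZ1 : 1 ≤ Z := by nlinarith
  have hLpos : 0 < L := by nlinarith
  have hγpos : 0 < γ := lt_of_lt_of_le (by positivity) hγlo
  have hγ16 : γ ≤ 1/6 := by
    have h1 : Mr^2/L ≤ 1/6 := by
      rw [div_le_div_iff₀ hLpos (by norm_num)]
      nlinarith
    linarith
  have h1 : L^2 * (γ - γ^2) ≥ (5/6) * (L^2 * γ) := by
    nlinarith [mul_nonneg (mul_nonneg (sq_nonneg L) hγpos.le) (by linarith : (0:ℝ) ≤ 1/6 - γ)]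
  have h2 : L^2 * γ ≥ L := by
    have : L * (1/L) ≤ L * γ := mul_le_mul_of_nonneg_left hγlo (le_of_lt hLpos)
    have hLL : L * (1/L) = 1 := by field_simp
    nlinarith
  have h3 : K * S ≤ kr * Z := by nlinarith
  have h4 : S^2 ≤ Z^2 := by nlinarith
  nlinarith

end NonAtomicHelpers

section NonAtomic

/-- The non-atomic case of the main theorem. -/
lemma nonatomic_case (hM : 2 ≤ M)
    (hinv : MeasurePreserving (shiftMap M) μ μ) (hsupp : μ (shiftSpace M Amat) = 1)
    (l : ℕ → ℕ) (hl : Tendsto l atTop atTop)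
    (hna : ∀ x : ℤ → Fin M, μ {x} = 0) :
    ∃ (C : ℕ → Set (ℤ → Fin M)) (a b : ℕ → ℤ),
      (∀ n, 1 ≤ n → a n ≤ b n ∧ IsCylinderOn M Amat (a n) (b n) (C n) ∧
        |a n + b n| ≤ (l n : ℤ)) ∧
      Tendsto (fun N : ℕ => ∑ n ∈ Finset.Icc 1 N, (μ (C n)).toReal) atTop atTop ∧
      ∀ K : ℝ, 0 < K → ∃ N : ℕ, 1 ≤ N ∧
        K * ∑ n ∈ Finset.Icc 1 N, (μ (C n)).toReal <
          ∑ m ∈ Finset.Icc 1 N, ∑ n ∈ Finset.Icc 1 N,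
            ((μ ((shiftMap M)^[m] ⁻¹' C m ∩ (shiftMap M)^[n] ⁻¹' C n)).toReal -
              (μ (C m)).toReal * (μ (C n)).toReal) := by
  classical
  have hM0 : 0 < M := by omega
  have hSne : (shiftSpace M Amat).Nonempty := by
    refine nonempty_of_measure_ne_zero (μ := μ) ?_
    rw [hsupp]; exact one_ne_zero
  -- schedule
  set Z : ℕ → ℕ := fun k => (k+1)*M^2 + 1 with hZdef
  set L : ℕ → ℕ := fun k => M^3 + 6*M^2 + 2*(Z k)^2 + 2*k*(Z k) + 2 with hLdef
  have hLgeM : ∀ k, M ≤ L k := by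
    intro k
    have h1 : M ≤ M^3 := Nat.le_self_pow (by norm_num) M
    simp only [hLdef]
    omega
  have hL1 : ∀ k, 1 ≤ L k := fun k => by have := hLgeM k; omega
  -- thresholds
  have hTex : ∀ k : ℕ, ∃ T : ℕ, ∀ n ≥ T, 2 * L k ≤ l n := by
    intro k
    exact eventually_atTop.mp (hl.eventually_ge_atTop (2 * L k))
  choose T hT using hTex
  -- block starts
  set u : ℕ → ℕ := fun k => Nat.rec (max 1 (T 0)) (fun k ih => max (ih + L k) (T (k+1))) k
    with hudef
  have hu0 : u 0 = max 1 (T 0) := rfl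
  have husucc : ∀ k, u (k+1) = max (u k + L k) (T (k+1)) := fun k => rfl
  have hustep : ∀ k, u k + L k ≤ u (k+1) := fun k => by rw [husucc]; omega
  have hu1 : ∀ k, 1 ≤ u k := by
    intro k
    induction k with
    | zero => rw [hu0]; omega
    | succ k ih => have := hustep k; omega
  have huT : ∀ k, T k ≤ u k := by
    intro k
    cases k with
    | zero => rw [hu0]; omega
    | succ k => rw [husucc]; omega
  have humono : ∀ j k, j ≤ k → u j ≤ u k := by
    intro j k hjk
    induction k with
    | zero => have : j = 0 := by omega
              subst this; exact le_refl _
    | succ k ih =>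
        rcases Nat.lt_or_ge j (k+1) with h | h
        · have h1 := ih (by omega)
          have h2 := hustep k
          have := hL1 k
          omega
        · have : j = k + 1 := by omega
          subst this; exact le_refl _
  have hured : ∀ j k, j < k → u j + L j ≤ u k := by
    intro j k hjk
    have h1 := hustep j
    have h2 := humono (j+1) k (by omega)
    omega
  -- block cylinders
  choose rr hrlo hrhi using fun k =>
    chain_band Amat μ hSne hM0 hsupp hna ((u k : ℕ) : ℤ) (hLgeM k)
  -- filler cylinders
  have hfex : ∀ n : ℕ, ∃ r, μ (Ech Amat μ hSne hM0 (n:ℤ) r) ≤ ((2:ℝ≥0∞)⁻¹)^n := by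
    intro n
    refine chain_small Amat μ hSne hM0 hna (n:ℤ) _ ?_
    exact ENNReal.pow_pos (ENNReal.inv_pos.mpr (by simp)) n
  choose rf hrf using hfex
  -- the assignment
  set inBlk : ℕ → Prop := fun n => ∃ k, u k ≤ n ∧ n < u k + L k with hinBlkdef
  have huniq : ∀ n j k, (u j ≤ n ∧ n < u j + L j) → (u k ≤ n ∧ n < u k + L k) → j = k := by
    intro n j k hj hk
    by_contra hne
    rcases Nat.lt_or_ge j k with h | h
    · have := hured j k h; omega
    · have hkj : k < j := by omega
      have := hured k j hkj; omega
  set kOf : ℕ → ℕ := fun n => if h : inBlk n then h.choose else 0 with hkOfdef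
  have hkOfspec : ∀ n (h : inBlk n), u (kOf n) ≤ n ∧ n < u (kOf n) + L (kOf n) := by
    intro n h
    simp only [hkOfdef, dif_pos h]
    exact h.choose_spec
  have hkOfeq : ∀ n k, u k ≤ n → n < u k + L k → kOf n = k := by
    intro n k h1 h2
    have hb : inBlk n := ⟨k, h1, h2⟩
    exact huniq n (kOf n) k (hkOfspec n hb) ⟨h1, h2⟩
  set ctr : ℕ → ℤ := fun n => if inBlk n then ((u (kOf n) : ℕ) : ℤ) else (n:ℤ) with hctrdef
  set rad : ℕ → ℕ := fun n => if inBlk n then rr (kOf n) else rf n with hraddef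
  set wrd : ℕ → (ℤ → Fin M) := fun n =>
    if inBlk n then cw Amat μ hSne hM0 ((u (kOf n) : ℕ) : ℤ) (rr (kOf n))
    else cw Amat μ hSne hM0 (n:ℤ) (rf n) with hwrddef
  set CC : ℕ → Set (ℤ → Fin M) := fun n => mkC Amat (ctr n) (rad n) (wrd n) n with hCCdef
  -- basic facts
  have hprein : ∀ n : ℕ, (shiftMap M)^[n] ⁻¹' CC n
      = Cyl Amat (ctr n - (rad n : ℤ)) (ctr n + (rad n : ℤ)) (wrd n) :=
    fun n => preimage_mkC Amat (ctr n) (rad n) (wrd n) n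
  have hmeasCC : ∀ n : ℕ, μ (CC n)
      = μ (Cyl Amat (ctr n - (rad n : ℤ)) (ctr n + (rad n : ℤ)) (wrd n)) :=
    fun n => measure_mkC Amat μ hinv (ctr n) (rad n) (wrd n) n
  have hDblk : ∀ n k, u k ≤ n → n < u k + L k →
      Cyl Amat (ctr n - (rad n : ℤ)) (ctr n + (rad n : ℤ)) (wrd n)
        = Ech Amat μ hSne hM0 ((u k : ℕ) : ℤ) (rr k) := by
    intro n k h1 h2
    have hb : inBlk n := ⟨k, h1, h2⟩
    have hk : kOf n = k := hkOfeq n k h1 h2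
    simp only [hctrdef, hraddef, hwrddef, if_pos hb, hk]
    rfl
  have hDfil : ∀ n, ¬ inBlk n →
      Cyl Amat (ctr n - (rad n : ℤ)) (ctr n + (rad n : ℤ)) (wrd n)
        = Ech Amat μ hSne hM0 (n:ℤ) (rf n) := by
    intro n h
    simp only [hctrdef, hraddef, hwrddef, if_neg h]
    rfl
  have hCCne : ∀ n : ℕ, (CC n).Nonempty := by
    intro n
    have h1 : ((shiftMap M)^[n] ⁻¹' CC n).Nonempty := by
      rw [hprein n]
      by_cases hb : inBlk n
      · obtain ⟨k, h1, h2⟩ := hb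
        rw [hDblk n k h1 h2]
        exact Ech_nonempty Amat μ hSne hM0 _ _
      · rw [hDfil n hb]
        exact Ech_nonempty Amat μ hSne hM0 _ _
    obtain ⟨x, hx⟩ := h1
    exact ⟨_, hx⟩
  -- real-valued block measure
  set grr : ℕ → ℝ := fun k => (μ (Ech Amat μ hSne hM0 ((u k : ℕ) : ℤ) (rr k))).toReal
    with hgrrdef
  have hgrlo : ∀ k, 1/(L k : ℝ) ≤ grr k := by
    intro k
    have h := hrlo k
    have h2 := ENNReal.toReal_mono (measure_ne_top μ _) h
    rw [ENNReal.toReal_inv] at h2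
    simpa [one_div] using h2
  have hgrhi : ∀ k, grr k ≤ (M:ℝ)^2/(L k : ℝ) := by
    intro k
    have h := hrhi k
    have hne : ((M:ℝ≥0∞)^2 * ((L k : ℕ) : ℝ≥0∞)⁻¹) ≠ ⊤ := by
      refine ENNReal.mul_ne_top ?_ ?_
      · simp
      · refine ENNReal.inv_ne_top.mpr ?_
        have := hL1 k
        simp only [ne_eq, Nat.cast_eq_zero]
        omega
    have h2 := ENNReal.toReal_mono hne h
    rw [ENNReal.toReal_mul, ENNReal.toReal_inv, ENNReal.toReal_pow] at h2
    simpa [div_eq_mul_inv] using h2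
  have hmeasblk : ∀ n k, u k ≤ n → n < u k + L k → (μ (CC n)).toReal = grr k := by
    intro n k h1 h2
    rw [hmeasCC n, hDblk n k h1 h2]
  have hmeasfil : ∀ n, ¬ inBlk n → (μ (CC n)).toReal ≤ ((2:ℝ)⁻¹)^n := by
    intro n h
    rw [hmeasCC n, hDfil n h]
    have h2 := ENNReal.toReal_mono (by simp : ((2:ℝ≥0∞)⁻¹)^n ≠ ⊤) (hrf n)
    rw [ENNReal.toReal_pow, ENNReal.toReal_inv] at h2
    simpa using h2
  have hCCnonneg : ∀ n, (0:ℝ) ≤ (μ (CC n)).toReal := fun n => ENNReal.toReal_nonneg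
  -- block finsets
  set B : ℕ → Finset ℕ := fun k => Finset.Icc (u k) (u k + L k - 1) with hBdef
  have hBcard : ∀ k, (B k).card = L k := by
    intro k
    rw [hBdef]
    simp only
    rw [Nat.card_Icc]
    have := hL1 k
    omega
  have hBmem : ∀ k n, n ∈ B k ↔ (u k ≤ n ∧ n < u k + L k) := by
    intro k n
    rw [hBdef]
    simp only [Finset.mem_Icc]
    have := hL1 k
    omega
  have hblocksum : ∀ k, ∑ n ∈ B k, (μ (CC n)).toReal = (L k : ℝ) * grr k := by
    intro k
    have hconst : ∀ n ∈ B k, (μ (CC n)).toReal = grr k := by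
      intro n hn
      rw [hBmem k n] at hn
      exact hmeasblk n k hn.1 hn.2
    rw [Finset.sum_congr rfl hconst, Finset.sum_const, hBcard k, nsmul_eq_mul]
  have hblocksum_ge1 : ∀ k, (1:ℝ) ≤ ∑ n ∈ B k, (μ (CC n)).toReal := by
    intro k
    rw [hblocksum k]
    have hLpos : (0:ℝ) < (L k : ℝ) := by
      have := hL1 k
      exact_mod_cast Nat.pos_of_ne_zero (by omega)
    have := mul_le_mul_of_nonneg_left (hgrlo k) (le_of_lt hLpos)
    calc (1:ℝ) = (L k : ℝ) * (1/(L k : ℝ)) := by field_simp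
      _ ≤ (L k : ℝ) * grr k := this
  -- conclusion
  refine ⟨CC, fun n => ctr n - (rad n : ℤ) - (n:ℤ), fun n => ctr n + (rad n : ℤ) - (n:ℤ),
    ?_, ?_, ?_⟩
  · -- cylinder properties
    intro n hn
    refine ⟨?_, ⟨fun i => wrd n (i + (n:ℤ)), rfl, hCCne n⟩, ?_⟩
    · show ctr n - (rad n : ℤ) - (n:ℤ) ≤ ctr n + (rad n : ℤ) - (n:ℤ)
      have : (0:ℤ) ≤ (rad n : ℤ) := by positivity
      omega
    · show |(ctr n - (rad n : ℤ) - (n:ℤ)) + (ctr n + (rad n : ℤ) - (n:ℤ))| ≤ (l n : ℤ)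
      have he : (ctr n - (rad n : ℤ) - (n:ℤ)) + (ctr n + (rad n : ℤ) - (n:ℤ))
          = 2 * ctr n - 2 * (n:ℤ) := by ring
      rw [he]
      by_cases hb : inBlk n
      · obtain ⟨k, h1, h2⟩ := hb
        have hk : kOf n = k := hkOfeq n k h1 h2
        have hctr : ctr n = ((u k : ℕ) : ℤ) := by
          simp only [hctrdef, if_pos (⟨k, h1, h2⟩ : inBlk n), hk]
          exact if_pos (⟨k, h1, h2⟩ : inBlk n)
        rw [hctr]
        have hln : 2 * L k ≤ l n := hT k n (le_trans (huT k) h1)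
        rw [abs_le]
        constructor
        · have : ((u k : ℕ) : ℤ) ≤ (n : ℤ) := by exact_mod_cast h1
          have h2' : (n:ℤ) < ((u k : ℕ) : ℤ) + (L k : ℤ) := by exact_mod_cast h2
          have h3' : (2 * L k : ℤ) ≤ (l n : ℤ) := by exact_mod_cast hln
          omega
        · have : ((u k : ℕ) : ℤ) ≤ (n : ℤ) := by exact_mod_cast h1
          have h3' : (0:ℤ) ≤ (l n : ℤ) := by positivity
          omega
      · have hctr : ctr n = (n:ℤ) := by simp only [hctrdef, if_neg hb]
        rw [hctr]
        have : 2 * (n:ℤ) - 2 * (n:ℤ) = 0 := by ring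
        rw [this]
        simp
  · -- divergence
    have hmono : Monotone (fun N : ℕ => ∑ n ∈ Finset.Icc 1 N, (μ (CC n)).toReal) := by
      intro N1 N2 h12
      refine Finset.sum_le_sum_of_subset_of_nonneg ?_ (fun n _ _ => hCCnonneg n)
      intro x hx
      simp only [Finset.mem_Icc] at *
      omega
    refine tendsto_atTop_atTop_of_monotone hmono ?_
    intro bb
    set k := Nat.ceil bb with hkdef
    set N := u k + L k - 1 with hNdef
    refine ⟨N, ?_⟩
    have hsub : ∀ j ≤ k, B j ⊆ Finset.Icc 1 N := by
      intro j hj x hx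
      rw [hBmem j x] at hx
      simp only [Finset.mem_Icc]
      constructor
      · have := hu1 j; omega
      · have h1 := humono j k hj
        have h2 : u j + L j ≤ u k + L k := by
          rcases Nat.lt_or_ge j k with h | h
          · have := hured j k h
            have := hL1 k
            omega
          · have : j = k := by omega
            subst this; omega
        omega
    have hdisj : ((Finset.range (k+1) : Finset ℕ) : Set ℕ).PairwiseDisjoint B := by
      intro i _ j _ hij
      simp only [Finset.disjoint_left]
      intro x hxi hxj
      rw [hBmem i x] at hxi
      rw [hBmem j x] at hxj
      exact hij (huniq x i j hxi hxj)
    have hbig : (Finset.range (k+1)).biUnion B ⊆ Finset.Icc 1 N := by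
      intro x hx
      rw [Finset.mem_biUnion] at hx
      obtain ⟨j, hj, hxj⟩ := hx
      exact hsub j (by simp at hj; omega) hxj
    calc bb ≤ (k : ℝ) := Nat.le_ceil bb
      _ ≤ ((k:ℝ) + 1) := by linarith
      _ = ∑ j ∈ Finset.range (k+1), (1:ℝ) := by
          rw [Finset.sum_const, Finset.card_range, nsmul_eq_mul, mul_one]
          push_cast; ring
      _ ≤ ∑ j ∈ Finset.range (k+1), ∑ n ∈ B j, (μ (CC n)).toReal :=
          Finset.sum_le_sum (fun j _ => hblocksum_ge1 j)
      _ = ∑ n ∈ (Finset.range (k+1)).biUnion B, (μ (CC n)).toReal :=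
          (Finset.sum_biUnion hdisj).symm
      _ ≤ ∑ n ∈ Finset.Icc 1 N, (μ (CC n)).toReal :=
          Finset.sum_le_sum_of_subset_of_nonneg hbig (fun n _ _ => hCCnonneg n)
  · -- failure of (SP)
    intro K hK
    set k := Nat.ceil K with hkdef
    have hkK : K ≤ (k:ℝ) := Nat.le_ceil K
    set N := u k + L k - 1 with hNdef
    have hN1 : 1 ≤ N := by
      have := hu1 k
      have := hL1 k
      omega
    refine ⟨N, hN1, ?_⟩
    set I := Finset.Icc 1 N with hIdef
    set S : ℝ := ∑ n ∈ I, (μ (CC n)).toReal with hSdef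
    have hS0 : 0 ≤ S := Finset.sum_nonneg (fun n _ => hCCnonneg n)
    -- S is bounded by Z k
    have hSle : S ≤ ((Z k : ℕ) : ℝ) := by
      rw [hSdef, ← Finset.sum_filter_add_sum_filter_not I inBlk (fun n => (μ (CC n)).toReal)]
      have hpart1 : ∑ n ∈ I.filter inBlk, (μ (CC n)).toReal ≤ ((k:ℝ)+1) * (M:ℝ)^2 := by
        have hsub : I.filter inBlk ⊆ (Finset.range (k+1)).biUnion B := by
          intro x hx
          simp only [Finset.mem_filter] at hx
          obtain ⟨hxI, hxb⟩ := hx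
          obtain ⟨j, h1, h2⟩ := hxb
          have hxN : x ≤ N := by
            simp only [hIdef, Finset.mem_Icc] at hxI
            omega
          have hjk : j ≤ k := by
            by_contra h
            have h3 := hured k j (by omega)
            have := hL1 k
            omega
          rw [Finset.mem_biUnion]
          refine ⟨j, by simp only [Finset.mem_range]; omega, ?_⟩
          rw [hBmem]
          exact ⟨h1, h2⟩
        have hdisj : ((Finset.range (k+1) : Finset ℕ) : Set ℕ).PairwiseDisjoint B := by
          intro i _ j _ hij
          simp only [Finset.disjoint_left]
          intro x hxi hxj
          rw [hBmem i x] at hxi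
          rw [hBmem j x] at hxj
          exact hij (huniq x i j hxi hxj)
        calc ∑ n ∈ I.filter inBlk, (μ (CC n)).toReal
            ≤ ∑ n ∈ (Finset.range (k+1)).biUnion B, (μ (CC n)).toReal :=
              Finset.sum_le_sum_of_subset_of_nonneg hsub (fun n _ _ => hCCnonneg n)
          _ = ∑ j ∈ Finset.range (k+1), ∑ n ∈ B j, (μ (CC n)).toReal :=
              Finset.sum_biUnion hdisj
          _ ≤ ∑ j ∈ Finset.range (k+1), (M:ℝ)^2 := by
              refine Finset.sum_le_sum (fun j _ => ?_)
              rw [hblocksum j]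
              have hLpos : (0:ℝ) < (L j : ℝ) := by
                have := hL1 j
                exact_mod_cast Nat.pos_of_ne_zero (by omega)
              have h1 := mul_le_mul_of_nonneg_left (hgrhi j) (le_of_lt hLpos)
              calc (L j : ℝ) * grr j ≤ (L j : ℝ) * ((M:ℝ)^2/(L j : ℝ)) := h1
                _ = (M:ℝ)^2 := by field_simp
          _ = ((k:ℝ)+1) * (M:ℝ)^2 := by
              rw [Finset.sum_const, Finset.card_range, nsmul_eq_mul]
              push_cast; ring
      have hpart2 : ∑ n ∈ I.filter (fun n => ¬ inBlk n), (μ (CC n)).toReal ≤ 1 := by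
        calc ∑ n ∈ I.filter (fun n => ¬ inBlk n), (μ (CC n)).toReal
            ≤ ∑ n ∈ I.filter (fun n => ¬ inBlk n), ((2:ℝ)⁻¹)^n := by
              refine Finset.sum_le_sum (fun n hn => ?_)
              exact hmeasfil n (Finset.mem_filter.mp hn).2
          _ ≤ ∑ n ∈ I, ((2:ℝ)⁻¹)^n := by
              refine Finset.sum_le_sum_of_subset_of_nonneg (Finset.filter_subset _ _)
                (fun n _ _ => by positivity)
          _ ≤ 1 := geom_icc_le_one N
      have hZval : ((Z k : ℕ) : ℝ) = ((k:ℝ)+1) * (M:ℝ)^2 + 1 := by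
        rw [hZdef]
        push_cast
        ring
      rw [hZval]
      linarith
    -- the double sum lower bound
    have hBsubI : B k ⊆ I := by
      intro x hx
      rw [hBmem k x] at hx
      simp only [hIdef, Finset.mem_Icc]
      have := hu1 k
      have := hL1 k
      omega
    have hsum1 : (L k : ℝ)^2 * (grr k - (grr k)^2) - S * S ≤
        ∑ m ∈ I, ∑ n ∈ I,
            ((μ ((shiftMap M)^[m] ⁻¹' CC m ∩ (shiftMap M)^[n] ⁻¹' CC n)).toReal -
              (μ (CC m)).toReal * (μ (CC n)).toReal) := by
      set q : ℝ := grr k - (grr k)^2 with hqdef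
      have hEqp : ∀ m ∈ B k, (shiftMap M)^[m] ⁻¹' CC m
          = Ech Amat μ hSne hM0 ((u k : ℕ) : ℤ) (rr k) := by
        intro m hm
        rw [hprein m]
        rw [hBmem] at hm
        exact hDblk m k hm.1 hm.2
      have hμblk : ∀ m ∈ B k, (μ (CC m)).toReal = grr k := by
        intro m hm
        rw [hBmem] at hm
        exact hmeasblk m k hm.1 hm.2
      have hpt : ∀ m ∈ I, ∀ n ∈ I,
          (if m ∈ B k then (if n ∈ B k then q else 0) else 0)
            - (μ (CC m)).toReal * (μ (CC n)).toReal
          ≤ (μ ((shiftMap M)^[m] ⁻¹' CC m ∩ (shiftMap M)^[n] ⁻¹' CC n)).toReal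
            - (μ (CC m)).toReal * (μ (CC n)).toReal := by
        intro m _ n _
        by_cases h1 : m ∈ B k
        · by_cases h2 : n ∈ B k
          · simp only [if_pos h1, if_pos h2]
            have hi : (shiftMap M)^[m] ⁻¹' CC m ∩ (shiftMap M)^[n] ⁻¹' CC n
                = Ech Amat μ hSne hM0 ((u k : ℕ) : ℤ) (rr k) := by
              rw [hEqp m h1, hEqp n h2, Set.inter_self]
            rw [hi]
            have hE : (μ (Ech Amat μ hSne hM0 ((u k : ℕ) : ℤ) (rr k))).toReal = grr k := rfl
            rw [hE, hqdef]
            nlinarith [sq_nonneg (grr k)]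
          · simp only [if_pos h1, if_neg h2]
            have := ENNReal.toReal_nonneg
              (a := μ ((shiftMap M)^[m] ⁻¹' CC m ∩ (shiftMap M)^[n] ⁻¹' CC n))
            linarith
        · simp only [if_neg h1]
          have := ENNReal.toReal_nonneg
            (a := μ ((shiftMap M)^[m] ⁻¹' CC m ∩ (shiftMap M)^[n] ⁻¹' CC n))
          linarith
      have hIB : I ∩ B k = B k := Finset.inter_eq_right.mpr hBsubI
      have hgsum : ∑ m ∈ I, ∑ n ∈ I,
          ((if m ∈ B k then (if n ∈ B k then q else 0) else 0)
            - (μ (CC m)).toReal * (μ (CC n)).toReal)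
          = (L k : ℝ)^2 * q - S * S := by
        have hinner : ∀ m : ℕ, ∑ n ∈ I,
            ((if m ∈ B k then (if n ∈ B k then q else 0) else 0)
              - (μ (CC m)).toReal * (μ (CC n)).toReal)
            = (if m ∈ B k then (L k : ℝ) * q else 0) - (μ (CC m)).toReal * S := by
          intro m
          rw [Finset.sum_sub_distrib]
          congr 1
          · by_cases h1 : m ∈ B k
            · simp only [if_pos h1]
              rw [Finset.sum_ite_mem, hIB, Finset.sum_const, hBcard k, nsmul_eq_mul]
            · simp only [if_neg h1]
              simp
          · rw [← Finset.mul_sum, hSdef]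
        calc ∑ m ∈ I, ∑ n ∈ I,
            ((if m ∈ B k then (if n ∈ B k then q else 0) else 0)
              - (μ (CC m)).toReal * (μ (CC n)).toReal)
            = ∑ m ∈ I, ((if m ∈ B k then (L k : ℝ) * q else 0) - (μ (CC m)).toReal * S) :=
              Finset.sum_congr rfl (fun m _ => hinner m)
          _ = (L k : ℝ)^2 * q - S * S := by
              rw [Finset.sum_sub_distrib, Finset.sum_ite_mem, hIB, Finset.sum_const,
                hBcard k, nsmul_eq_mul, ← Finset.sum_mul, ← hSdef]
              ring
      rw [← hgsum]
      exact Finset.sum_le_sum (fun m hm => Finset.sum_le_sum (fun n hn => hpt m hm n hn))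
    -- numeric conclusion
    have hnum : K * S < (L k : ℝ)^2 * (grr k - (grr k)^2) - S * S := by
      have hfin := numeric_nonatomic K S ((L k : ℕ) : ℝ) (grr k) ((M:ℕ):ℝ) ((k:ℕ):ℝ)
        ((Z k : ℕ) : ℝ) ?_ hK hkK ?_ hS0 hSle ?_ (hgrlo k) (hgrhi k)
      · calc K * S < ((L k:ℕ):ℝ)^2 * (grr k - (grr k)^2) - S^2 := hfin
          _ = (L k : ℝ)^2 * (grr k - (grr k)^2) - S * S := by ring
      · rw [hZdef]; push_cast; ring
      · exact_mod_cast hM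
      · rw [hLdef, hZdef]
        push_cast
        have : (0:ℝ) ≤ ((M:ℕ):ℝ)^3 := by positivity
        push_cast at this ⊢
        nlinarith
    linarith [hsum1, hnum]

end NonAtomic

end SPAux


open SPAux in
/-- **Theorem 2.3.** Let `μ` be a shift-invariant probability measure on the
two-sided subshift `Σ_A` admitting a cylinder of measure strictly between `0`
and `1`, and let `(l n)` be positive integers with `l n → ∞`. Then there is a
sequence of cylinders `(C n)` on intervals `Λ n = [a n, b n]` that are
`(l n)`-centered (`|a n + b n| ≤ l n`), with divergent sum of measures, which
does not satisfy condition (SP). -/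
theorem exists_centered_cylinders_failing_SP
    (M : ℕ) (hM : 2 ≤ M) (Amat : Fin M → Fin M → Bool)
    (μ : Measure (ℤ → Fin M)) [IsProbabilityMeasure μ]
    (hinv : MeasurePreserving (shiftMap M) μ μ) (hsupp : μ (shiftSpace M Amat) = 1)
    (hcylex : ∃ (a b : ℤ) (Ct : Set (ℤ → Fin M)), a ≤ b ∧
      IsCylinderOn M Amat a b Ct ∧ 0 < μ Ct ∧ μ Ct < 1)
    (l : ℕ → ℕ) (hlpos : ∀ n, 1 ≤ n → 0 < l n) (hl : Tendsto l atTop atTop) :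
    ∃ (C : ℕ → Set (ℤ → Fin M)) (a b : ℕ → ℤ),
      (∀ n, 1 ≤ n → a n ≤ b n ∧ IsCylinderOn M Amat (a n) (b n) (C n) ∧
        |a n + b n| ≤ (l n : ℤ)) ∧
      Tendsto (fun N : ℕ => ∑ n ∈ Finset.Icc 1 N, (μ (C n)).toReal) atTop atTop ∧
      ∀ K : ℝ, 0 < K → ∃ N : ℕ, 1 ≤ N ∧
        K * ∑ n ∈ Finset.Icc 1 N, (μ (C n)).toReal <
          ∑ m ∈ Finset.Icc 1 N, ∑ n ∈ Finset.Icc 1 N,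
            ((μ ((shiftMap M)^[m] ⁻¹' C m ∩ (shiftMap M)^[n] ⁻¹' C n)).toReal -
              (μ (C m)).toReal * (μ (C n)).toReal) := by
  classical
  obtain ⟨a0, b0, Ct, hab, hCt, hpos, hlt1⟩ := hcylex
  by_cases hat : ∃ x : ℤ → Fin M, μ {x} ≠ 0
  · obtain ⟨x0, hx0⟩ := hat
    exact atomic_case Amat μ hM hinv hsupp hab hCt hpos hlt1 l x0 hx0
  · push_neg at hat
    exact nonatomic_case Amat μ hM hinv hsupp l hl (fun x => by simpa using hat x)
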